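/- Let λ₁, λ₂, μ₁, μ₂, θ_s > 0, γ_s = λ₁/(λ₁+λ₂), and let P_m = ∏_{i=1}^{m} (λ₁+λ₂)/(μ₁+μ₂+i·θ_s) and S_m = ∏_{i=1}^{m} ((μ₁ + μ₂·[i>1] + (i-1)θ_s)(1-γ_s))/(μ₂+i·θ_s). Then for all m ≥ 1, P_m · S_m · (μ₁ + μ₂ + m·θ_s) = μ₁ · ∏_{i=1}^{m} λ₂/(μ₂ + i·θ_s). -/

import Mathlib

theorem stmt_6 (l1 l2 m1 m2 θ : ℝ) (hl1 : 0 < l1) (hl2 : 0 < l2) (hm1 : 0 < m1)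
    (hm2 : 0 < m2) (hθ : 0 < θ) (γ : ℝ) (hγ : γ = l1 / (l1 + l2)) :
    ∀ m : ℕ, 1 ≤ m →
      (∏ i ∈ Finset.Icc 1 m, (l1 + l2) / (m1 + m2 + (i : ℝ) * θ)) *
        (∏ i ∈ Finset.Icc 1 m,
          ((m1 + (if 1 < i then m2 else 0) + ((i : ℝ) - 1) * θ) * (1 - γ)) /
            (m2 + (i : ℝ) * θ)) *
        (m1 + m2 + (m : ℝ) * θ) =
      m1 * ∏ i ∈ Finset.Icc 1 m, l2 / (m2 + (i : ℝ) * θ) := by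
  have hl12 : l1 + l2 ≠ 0 := by positivity
  subst hγ
  intro m hm
  induction m, hm using Nat.le_induction with
  | base =>
      simp only [Finset.Icc_self, Finset.prod_singleton]
      norm_num
      field_simp
      ring
  | succ n hn ih =>
      rw [Finset.prod_Icc_succ_top (by omega : 1 ≤ n + 1),
          Finset.prod_Icc_succ_top (by omega : 1 ≤ n + 1),
          Finset.prod_Icc_succ_top (by omega : 1 ≤ n + 1)]
      have h1 : (1 : ℕ) < n + 1 := by omega
      simp only [if_pos h1]
      push_cast
      have hX : m1 + m2 + (n : ℝ) * θ ≠ 0 := by positivity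
      have hX' : m1 + m2 + ((n : ℝ) + 1) * θ ≠ 0 := by positivity
      have hY : m2 + ((n : ℝ) + 1) * θ ≠ 0 := by positivity
      set A := ∏ i ∈ Finset.Icc 1 n, (l1 + l2) / (m1 + m2 + (i : ℝ) * θ)
      set B := ∏ i ∈ Finset.Icc 1 n,
          ((m1 + (if 1 < i then m2 else 0) + ((i : ℝ) - 1) * θ) * (1 - l1 / (l1 + l2))) /
            (m2 + (i : ℝ) * θ)
      set C := ∏ i ∈ Finset.Icc 1 n, l2 / (m2 + (i : ℝ) * θ)
      field_simp at ih ⊢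
      linear_combination l2 * ih
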